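/- A linearly trivial k-algebra automorphism σ ∈ I_{q,n} of A_{q,n} satisfies σ(q_1) = q_1 if and only if σ(x_i) − x_i ∈ q_1·m for every i = 2, …, q. Consequently, the map σ ↦ (σ(x_1) − x_1, (σ(x_i) − x_i)_{i=2,…,q}) is a bijection from I_{q,n} ∩ G_1 onto m² × (q_1·m)^{q−1}. -/

import Mathlib

set_option synthInstance.maxHeartbeats 400000
set_option maxHeartbeats 1000000

noncomputable section

/-- The ring of `n`-nil polynomials `A_{q,n} = k[x_1,…,x_q]/m_0^n`. -/
abbrev Aqn (k : Type) [Field k] (q n : ℕ) : Type :=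
  MvPolynomial (Fin q) k ⧸
    (Ideal.span (Set.range (MvPolynomial.X : Fin q → MvPolynomial (Fin q) k))) ^ n

/-- The image of the variable `x_i` in `A_{q,n}`. -/
def xA (k : Type) [Field k] (q n : ℕ) (i : Fin q) : Aqn k q n :=
  Ideal.Quotient.mk _ (MvPolynomial.X i)

/-- The maximal ideal `m` of `A_{q,n}` generated by `x_1, …, x_q`. -/
def mA (k : Type) [Field k] (q n : ℕ) : Ideal (Aqn k q n) :=
  Ideal.span (Set.range (xA k q n))

/-- The ideal `q_1` of `A_{q,n}` generated by `x_2, …, x_q`. -/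
def q1A (k : Type) [Field k] (q n : ℕ) [NeZero q] : Ideal (Aqn k q n) :=
  Ideal.span {y | ∃ i : Fin q, i ≠ 0 ∧ y = xA k q n i}

namespace Aux12

open MvPolynomial

variable (k : Type) [Field k] (q n : ℕ)

abbrev R := MvPolynomial (Fin q) k

def m0 : Ideal (R k q) := Ideal.span (Set.range MvPolynomial.X)

def q10 [NeZero q] : Ideal (R k q) :=
  Ideal.span {y | ∃ i : Fin q, i ≠ 0 ∧ y = MvPolynomial.X i}

abbrev mkq : R k q →+* Aqn k q n := Ideal.Quotient.mk _

lemma mkq_surj : Function.Surjective (mkq k q n) := Ideal.Quotient.mk_surjective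

lemma mA_eq : mA k q n = (m0 k q).map (mkq k q n) := by
  rw [m0, Ideal.map_span, ← Set.range_comp]; rfl

lemma mA_pow : mA k q n ^ n = ⊥ := by
  rw [mA_eq, ← Ideal.map_pow]
  exact Ideal.map_quotient_self _

lemma q1A_eq [NeZero q] : q1A k q n = (q10 k q).map (mkq k q n) := by
  rw [q10, Ideal.map_span]
  have : (mkq k q n) '' {y | ∃ i : Fin q, i ≠ 0 ∧ y = MvPolynomial.X i} =
      {y | ∃ i : Fin q, i ≠ 0 ∧ y = xA k q n i} := by
    ext y
    constructor
    · rintro ⟨p, ⟨i, hi, rfl⟩, rfl⟩; exact ⟨i, hi, rfl⟩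
    · rintro ⟨i, hi, rfl⟩; exact ⟨MvPolynomial.X i, ⟨i, hi, rfl⟩, rfl⟩
  rw [this, q1A]

lemma X_mem_q10 [NeZero q] {i : Fin q} (hi : i ≠ 0) : MvPolynomial.X i ∈ q10 k q :=
  Ideal.subset_span ⟨i, hi, rfl⟩

lemma xA_mem_q1A [NeZero q] {i : Fin q} (hi : i ≠ 0) : xA k q n i ∈ q1A k q n :=
  Ideal.subset_span ⟨i, hi, rfl⟩

lemma xA_mem_mA (i : Fin q) : xA k q n i ∈ mA k q n :=
  Ideal.subset_span ⟨i, rfl⟩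

lemma q1A_le_mA [NeZero q] : q1A k q n ≤ mA k q n :=
  Ideal.span_le.2 (by rintro y ⟨i, hi, rfl⟩; exact xA_mem_mA k q n i)

/-- constant-coefficient vanishing on `m0` -/
lemma m0_le_ker_cc : m0 k q ≤ RingHom.ker (constantCoeff : R k q →+* k) := by
  rw [m0, Ideal.span_le]
  rintro y ⟨i, rfl⟩
  simp [RingHom.mem_ker]

lemma sub_C_mem_m0 (f : R k q) : f - MvPolynomial.C (constantCoeff f) ∈ m0 k q := by
  induction f using MvPolynomial.induction_on with
  | C a => simp
  | add p r hp hr =>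
      have := (m0 k q).add_mem hp hr
      simpa [map_add, MvPolynomial.C_add, sub_add_sub_comm] using this
  | mul_X p i hp =>
      have : constantCoeff (p * MvPolynomial.X i) = 0 := by simp
      rw [this]
      rw [map_zero, sub_zero]; exact Ideal.mul_mem_left _ p (Ideal.subset_span ⟨i, rfl⟩ : MvPolynomial.X i ∈ m0 k q)


section Phi

variable {k q} (F : Fin q → R k q) (hF : ∀ i, F i ∈ (m0 k q) ^ 2)

/-- The substitution endomorphism `X i ↦ X i + F i`. -/
def Phi : R k q →ₐ[k] R k q :=
  MvPolynomial.aeval (fun i => MvPolynomial.X i + F i)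

lemma Phi_X (i : Fin q) : Phi F (MvPolynomial.X i) = MvPolynomial.X i + F i := by
  simp [Phi]

lemma m0_sq_le : (m0 k q) ^ 2 ≤ m0 k q := Ideal.pow_le_self two_ne_zero

include hF

lemma Phi_sub_mem (p : R k q) : Phi F p - p ∈ m0 k q := by
  induction p using MvPolynomial.induction_on with
  | C a => simp
  | add p r hp hr => simpa [map_add, add_sub_add_comm] using (m0 k q).add_mem hp hr
  | mul_X p i hp =>
      have h1 : Phi F (p * MvPolynomial.X i) - p * MvPolynomial.X i =
          (Phi F p - p) * MvPolynomial.X i + Phi F p * F i := by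
        rw [map_mul, Phi_X]; ring
      rw [h1]
      exact (m0 k q).add_mem (Ideal.mul_mem_left _ _ (Ideal.subset_span ⟨i, rfl⟩))
        (Ideal.mul_mem_left _ _ (m0_sq_le (hF i)))

lemma Phi_mem (p : R k q) (hp : p ∈ m0 k q) : Phi F p ∈ m0 k q := by
  have := (m0 k q).add_mem (Phi_sub_mem F hF p) hp
  simpa using this

lemma Phi_sub_mem_sq (p : R k q) (hp : p ∈ m0 k q) : Phi F p - p ∈ (m0 k q) ^ 2 := by
  rw [m0] at hp
  induction hp using Submodule.span_induction with
  | mem x hx =>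
      obtain ⟨i, rfl⟩ := hx
      rw [Phi_X]; simpa using hF i
  | zero => simp
  | add x y hx hy hx' hy' => simpa [map_add, add_sub_add_comm] using ((m0 k q) ^ 2).add_mem hx' hy'
  | smul r x hx hx' =>
      have hxm : x ∈ m0 k q := by rw [m0]; exact hx
      have h1 : Phi F (r • x) - r • x = (Phi F r - r) * Phi F x + r * (Phi F x - x) := by
        simp only [smul_eq_mul, map_mul]; ring
      rw [h1, sq]
      exact Ideal.add_mem _
        (Ideal.mul_mem_mul (Phi_sub_mem F hF r) (Phi_mem F hF x hxm))
        (by rw [← sq]; exact Ideal.mul_mem_left _ r hx')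

lemma Phi_sub_mem_pow (j : ℕ) (p : R k q) (hp : p ∈ (m0 k q) ^ (j + 1)) :
    Phi F p - p ∈ (m0 k q) ^ (j + 2) := by
  induction j generalizing p with
  | zero => simpa using Phi_sub_mem_sq F hF p (by simpa using hp)
  | succ j ih =>
      rw [pow_succ] at hp
      refine Submodule.mul_induction_on hp (fun a ha b hb => ?_) (fun x y hx hy => ?_)
      ·
          have h1 : Phi F (a * b) - a * b = (Phi F a - a) * Phi F b + a * (Phi F b - b) := by
            rw [map_mul]; ring
          rw [h1]
          have hbm : b ∈ m0 k q := hb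
          have key1 : (Phi F a - a) * Phi F b ∈ (m0 k q) ^ (j + 3) := by
            rw [pow_succ]
            exact Ideal.mul_mem_mul (ih a ha) (Phi_mem F hF b hbm)
          have key2 : a * (Phi F b - b) ∈ (m0 k q) ^ (j + 3) := by
            have : (m0 k q) ^ (j + 3) = (m0 k q) ^ (j + 1) * (m0 k q) ^ 2 := by ring
            rw [this]
            exact Ideal.mul_mem_mul ha (Phi_sub_mem_sq F hF b hbm)
          exact Ideal.add_mem _ key1 key2
      · simpa [map_add, add_sub_add_comm] using Ideal.add_mem _ hx hy

end Phi
section PhiA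

variable {k q} (n : ℕ) (F : Fin q → R k q)

lemma Phi_ker (hF : ∀ i, F i ∈ (m0 k q) ^ 2) (a : R k q) (ha : a ∈ (m0 k q) ^ n) :
    (Ideal.Quotient.mkₐ k ((m0 k q) ^ n)) (Phi F a) = 0 := by
  rw [Ideal.Quotient.mkₐ_eq_mk, Ideal.Quotient.eq_zero_iff_mem]
  have hmap : Ideal.map (Phi F : R k q →+* R k q) ((m0 k q) ^ n) ≤ (m0 k q) ^ n := by
    rw [Ideal.map_pow]
    refine Ideal.pow_right_mono ?_ n
    rw [m0, Ideal.map_span]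
    refine Ideal.span_le.2 ?_
    rintro y ⟨p, ⟨i, rfl⟩, rfl⟩
    have : (Phi F : R k q →+* R k q) (MvPolynomial.X i) = MvPolynomial.X i + F i := Phi_X F i
    rw [this]
    exact Ideal.add_mem _ (Ideal.subset_span ⟨i, rfl⟩) (m0_sq_le (hF i))
  exact hmap (Ideal.mem_map_of_mem _ ha)

/-- The induced endomorphism of `A_{q,n}`. -/
def phiA (hF : ∀ i, F i ∈ (m0 k q) ^ 2) : Aqn k q n →ₐ[k] Aqn k q n :=
  Ideal.Quotient.liftₐ ((m0 k q) ^ n)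
    ((Ideal.Quotient.mkₐ k ((m0 k q) ^ n)).comp (Phi F)) (fun a ha => Phi_ker n F hF a ha)

lemma phiA_mk (hF : ∀ i, F i ∈ (m0 k q) ^ 2) (p : R k q) : phiA n F hF (mkq k q n p) = mkq k q n (Phi F p) := rfl

lemma phiA_x (hF : ∀ i, F i ∈ (m0 k q) ^ 2) (i : Fin q) : phiA n F hF (xA k q n i) = xA k q n i + mkq k q n (F i) := by
  have : phiA n F hF (mkq k q n (MvPolynomial.X i)) = mkq k q n (MvPolynomial.X i + F i) := by
    rw [phiA_mk, Phi_X]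
  simpa [xA] using this

/-- `phiA - id` as an endomorphism. -/
def eta (hF : ∀ i, F i ∈ (m0 k q) ^ 2) : Module.End k (Aqn k q n) :=
  (phiA n F hF).toLinearMap - LinearMap.id

lemma eta_apply (hF : ∀ i, F i ∈ (m0 k q) ^ 2) (z : Aqn k q n) :
    eta n F hF z = phiA n F hF z - z := rfl

lemma eta_pow_mem (hF : ∀ i, F i ∈ (m0 k q) ^ 2) (j : ℕ) (z : Aqn k q n) :
    ((eta n F hF) ^ (j + 1)) z ∈ (mA k q n) ^ (j + 1) := by
  induction j generalizing z with
  | zero =>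
      obtain ⟨p, rfl⟩ := mkq_surj k q n z
      show (eta n F hF ^ 1) (mkq k q n p) ∈ (mA k q n) ^ 1
      rw [pow_one, Submodule.pow_one, eta_apply _ _ hF, phiA_mk]
      have : mkq k q n (Phi F p) - mkq k q n p = mkq k q n (Phi F p - p) := by rw [map_sub]
      rw [this, mA_eq]
      exact Ideal.mem_map_of_mem _ (Phi_sub_mem F hF p)
  | succ j ih =>
      have h1 : ((eta n F hF) ^ (j + 1 + 1)) z =
          (eta n F hF) (((eta n F hF) ^ (j + 1)) z) := by
        rw [← Module.End.mul_apply, ← pow_succ']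
      rw [h1]
      have h3 : ((eta n F hF) ^ (j + 1)) z ∈
          Ideal.map (mkq k q n) ((m0 k q) ^ (j + 1)) := by
        rw [Ideal.map_pow, ← mA_eq]; exact ih z
      obtain ⟨p, hp, hpe⟩ := Ideal.mem_map_iff_of_surjective _ (mkq_surj k q n) |>.1 h3
      rw [← hpe, eta_apply _ _ hF, phiA_mk, ← map_sub]
      rw [mA_eq, ← Ideal.map_pow]
      exact Ideal.mem_map_of_mem _ (Phi_sub_mem_pow F hF j p hp)

lemma eta_nilpotent (hF : ∀ i, F i ∈ (m0 k q) ^ 2) (hn : 2 ≤ n) :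
    IsNilpotent (eta n F hF) := by
  refine ⟨n, ?_⟩
  refine LinearMap.ext fun z => ?_
  obtain ⟨m, rfl⟩ : ∃ m, n = m + 1 := ⟨n - 1, by omega⟩
  have := eta_pow_mem (m + 1) F hF m z
  rw [mA_pow k q (m + 1)] at this
  simpa using this


lemma phiA_bijective (hF : ∀ i, F i ∈ (m0 k q) ^ 2) (hn : 2 ≤ n) :
    Function.Bijective (phiA n F hF) := by
  have h2 : (phiA n F hF).toLinearMap = 1 + eta n F hF := by
    rw [eta, ← Module.End.one_eq_id]
    abel
  have hunit : IsUnit ((phiA n F hF).toLinearMap) := by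
    rw [h2]
    exact (eta_nilpotent n F hF hn).isUnit_one_add
  exact (Module.End.isUnit_iff _).1 hunit

end PhiA

section Inter

variable {k : Type} [Field k] {q : ℕ} [NeZero q]

lemma q10_le_m0 : q10 k q ≤ m0 k q :=
  Ideal.span_le.2 (by rintro y ⟨i, _, rfl⟩; exact Ideal.subset_span ⟨i, rfl⟩)

lemma cc_pderiv_mem_sq (i : Fin q) {f : R k q} (hf : f ∈ (m0 k q) ^ 2) :
    MvPolynomial.constantCoeff f = 0 ∧
      MvPolynomial.constantCoeff (MvPolynomial.pderiv i f) = 0 := by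
  rw [sq] at hf
  refine Submodule.mul_induction_on hf ?_ ?_
  · intro a ha b hb
    have ha0 : MvPolynomial.constantCoeff a = 0 := m0_le_ker_cc k q ha
    have hb0 : MvPolynomial.constantCoeff b = 0 := m0_le_ker_cc k q hb
    refine ⟨by rw [map_mul, ha0, zero_mul], ?_⟩
    rw [MvPolynomial.pderiv_mul, map_add, map_mul, map_mul, ha0, hb0]
    ring
  · intro x y hx hy
    exact ⟨by rw [map_add, hx.1, hy.1, add_zero],
      by rw [map_add, map_add, hx.2, hy.2, add_zero]⟩

lemma q10_inf_le : q10 k q ⊓ (m0 k q) ^ 2 ≤ q10 k q * m0 k q := by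
  intro p hp
  obtain ⟨hp1, hp2⟩ := Submodule.mem_inf.1 hp
  have hsp : q10 k q =
      Ideal.span (Set.range fun i : {i : Fin q // i ≠ 0} => (MvPolynomial.X i.1 : R k q)) := by
    rw [q10]
    congr 1
    ext y
    constructor
    · rintro ⟨i, hi, rfl⟩; exact ⟨⟨i, hi⟩, rfl⟩
    · rintro ⟨i, rfl⟩; exact ⟨i.1, i.2, rfl⟩
  rw [hsp, Ideal.mem_span_range_iff_exists_fun] at hp1
  obtain ⟨c, hc⟩ := hp1
  classical
  set h : {i : Fin q // i ≠ 0} → R k q :=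
    fun i => c i - MvPolynomial.C (MvPolynomial.constantCoeff (c i)) with hh
  have hhm : ∀ i, h i ∈ m0 k q := fun i => sub_C_mem_m0 k q (c i)
  have hsum : (∑ i, h i * MvPolynomial.X i.1) ∈ q10 k q * m0 k q := by
    refine Ideal.sum_mem _ fun i _ => ?_
    rw [mul_comm (q10 k q) (m0 k q)]
    exact Ideal.mul_mem_mul (hhm i) (X_mem_q10 k q i.2)
  have hq10m : q10 k q * m0 k q ≤ (m0 k q) ^ 2 := by
    rw [sq]; exact Ideal.mul_mono q10_le_m0 le_rfl
  set L : R k q :=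
    ∑ i, MvPolynomial.C (MvPolynomial.constantCoeff (c i)) * MvPolynomial.X i.1 with hL
  have hpL : p = L + ∑ i, h i * MvPolynomial.X i.1 := by
    rw [hL, hh, ← hc, ← Finset.sum_add_distrib]
    refine Finset.sum_congr rfl fun i _ => ?_
    ring
  have hLm : L ∈ (m0 k q) ^ 2 := by
    have hL2 : L = p - ∑ i, h i * MvPolynomial.X i.1 := by rw [hpL]; ring
    rw [hL2]
    exact Submodule.sub_mem _ hp2 (hq10m hsum)
  have hczero : ∀ i : {i : Fin q // i ≠ 0}, MvPolynomial.constantCoeff (c i) = 0 := by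
    intro i
    have h1 := (cc_pderiv_mem_sq i.1 hLm).2
    have h2 : MvPolynomial.constantCoeff (MvPolynomial.pderiv i.1 L) =
        MvPolynomial.constantCoeff (c i) := by
      rw [hL, map_sum, map_sum]
      rw [Finset.sum_congr rfl (fun j _ => ?_), Finset.sum_ite_eq' Finset.univ i
        (fun j => MvPolynomial.constantCoeff (c j))]
      · simp
      · show MvPolynomial.constantCoeff
          (MvPolynomial.pderiv i.1 (MvPolynomial.C (MvPolynomial.constantCoeff (c j)) *
            MvPolynomial.X j.1)) = if j = i then MvPolynomial.constantCoeff (c j) else 0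
        rw [MvPolynomial.pderiv_C_mul, MvPolynomial.pderiv_X]
        rcases eq_or_ne j i with rfl | hji
        · simp
        · have hne : j.1 ≠ i.1 := fun hc' => hji (Subtype.ext hc')
          simp [Pi.single_apply, hne, hji]
    rw [h2] at h1
    exact h1
  have hLzero : L = 0 := by
    rw [hL]
    refine Finset.sum_eq_zero fun i _ => ?_
    rw [hczero i]
    simp
  rw [hpL, hLzero, zero_add]
  exact hsum

end Inter

section Main

variable {k : Type} [Field k] {q n : ℕ} [NeZero q]

lemma q1A_inf_le (hn : 2 ≤ n) : q1A k q n ⊓ (mA k q n) ^ 2 ≤ q1A k q n * mA k q n := by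
  intro z hz
  obtain ⟨hz1, hz2⟩ := Submodule.mem_inf.1 hz
  rw [q1A_eq] at hz1
  obtain ⟨p, hp, rfl⟩ := Ideal.mem_map_iff_of_surjective _ (mkq_surj k q n) |>.1 hz1
  have hker : RingHom.ker (mkq k q n) ≤ (m0 k q) ^ 2 := by
    rw [Ideal.mk_ker]
    exact Ideal.pow_le_pow_right hn
  have hp2 : p ∈ (m0 k q) ^ 2 := by
    have h1 : mkq k q n p ∈ Ideal.map (mkq k q n) ((m0 k q) ^ 2) := by
      rw [Ideal.map_pow, ← mA_eq]; exact hz2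
    obtain ⟨p', hp', hpe⟩ := Ideal.mem_map_iff_of_surjective _ (mkq_surj k q n) |>.1 h1
    have hker2 : p - p' ∈ RingHom.ker (mkq k q n) := by
      rw [RingHom.mem_ker, map_sub, hpe, sub_self]
    have hsplit : p = p' + (p - p') := by ring
    rw [hsplit]
    exact Ideal.add_mem _ hp' (hker hker2)
  have hmem := q10_inf_le (Submodule.mem_inf.2 ⟨hp, hp2⟩)
  rw [q1A_eq, mA_eq, ← Ideal.map_mul]
  exact Ideal.mem_map_of_mem _ hmem

lemma map_q1A_eq (σ : Aqn k q n ≃ₐ[k] Aqn k q n)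
    (h : ∀ i : Fin q, i ≠ 0 → σ (xA k q n i) - xA k q n i ∈ q1A k q n * mA k q n) :
    Ideal.map σ (q1A k q n) = q1A k q n := by
  have hle : Ideal.map σ (q1A k q n) ≤ q1A k q n := by
    rw [q1A, Ideal.map_span]
    refine Ideal.span_le.2 ?_
    rintro y ⟨z, ⟨i, hi, rfl⟩, rfl⟩
    have hsplit : σ (xA k q n i) = xA k q n i + (σ (xA k q n i) - xA k q n i) := by ring
    show σ (xA k q n i) ∈ q1A k q n
    rw [hsplit]
    exact Ideal.add_mem _ (xA_mem_q1A k q n hi) (Ideal.mul_le_left (h i hi))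
  have hge : ∀ j : ℕ, q1A k q n ≤ Ideal.map σ (q1A k q n) ⊔ q1A k q n * (mA k q n) ^ j := by
    intro j
    induction j with
    | zero =>
        have : q1A k q n * (mA k q n) ^ 0 = q1A k q n := by rw [pow_zero, mul_one]
        rw [this]
        exact le_sup_right
    | succ j ih =>
        have step : q1A k q n * mA k q n ≤
            Ideal.map σ (q1A k q n) ⊔ q1A k q n * (mA k q n) ^ (j + 1) := by
          calc q1A k q n * mA k q n
              ≤ (Ideal.map σ (q1A k q n) ⊔ q1A k q n * (mA k q n) ^ j) * mA k q n :=
                Ideal.mul_mono ih le_rfl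
            _ = Ideal.map σ (q1A k q n) * mA k q n ⊔
                q1A k q n * (mA k q n) ^ j * mA k q n := by rw [Ideal.sup_mul]
            _ ≤ Ideal.map σ (q1A k q n) ⊔ q1A k q n * (mA k q n) ^ (j + 1) := by
                refine sup_le_sup Ideal.mul_le_left (le_of_eq ?_)
                rw [mul_assoc, ← Submodule.pow_succ]
        rw [q1A]
        refine Ideal.span_le.2 ?_
        rintro y ⟨i, hi, rfl⟩
        have hsplit : xA k q n i = σ (xA k q n i) - (σ (xA k q n i) - xA k q n i) := by ring
        have h1 : σ (xA k q n i) ∈ Ideal.map σ (q1A k q n) :=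
          Ideal.mem_map_of_mem _ (xA_mem_q1A k q n hi)
        show xA k q n i ∈ _
        rw [hsplit]
        exact Submodule.sub_mem _ (le_sup_left (b := q1A k q n * (mA k q n) ^ (j + 1)) h1) (step (h i hi))
  have := hge n
  rw [mA_pow, Ideal.mul_bot, sup_bot_eq] at this
  exact le_antisymm hle this

lemma part1 (hn : 2 ≤ n) (σ : Aqn k q n ≃ₐ[k] Aqn k q n)
    (hlin : ∀ i, σ (xA k q n i) - xA k q n i ∈ (mA k q n) ^ 2) :
    Ideal.map σ (q1A k q n) = q1A k q n ↔
      ∀ i : Fin q, i ≠ 0 → σ (xA k q n i) - xA k q n i ∈ q1A k q n * mA k q n := by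
  constructor
  · intro hmap i hi
    have h1 : σ (xA k q n i) ∈ q1A k q n := by
      rw [← hmap]; exact Ideal.mem_map_of_mem _ (xA_mem_q1A k q n hi)
    have h2 : σ (xA k q n i) - xA k q n i ∈ q1A k q n :=
      Submodule.sub_mem _ h1 (xA_mem_q1A k q n hi)
    exact q1A_inf_le hn (Submodule.mem_inf.2 ⟨h2, hlin i⟩)
  · exact map_q1A_eq σ

end Main
end Aux12

open Aux12

/-- a linearly trivial automorphism `σ` stabilizes `q_1` iff
`σ(x_i) - x_i ∈ q_1·m` for all `i ≥ 2`; consequently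
`σ ↦ (σ(x_1) - x_1, (σ(x_i) - x_i)_{i ≥ 2})` is a bijection from `I_{q,n} ∩ G_1`
onto `m² × (q_1·m)^(q-1)`. -/
theorem lin_trivial_stabilizer_of_q1 (k : Type) [Field k] (q n : ℕ) [NeZero q]
    (hq : 2 ≤ q) (hn : 2 ≤ n) :
    (∀ σ : Aqn k q n ≃ₐ[k] Aqn k q n,
      (∀ i, σ (xA k q n i) - xA k q n i ∈ (mA k q n) ^ 2) →
        (Ideal.map σ (q1A k q n) = q1A k q n ↔
          ∀ i : Fin q, i ≠ 0 → σ (xA k q n i) - xA k q n i ∈ q1A k q n * mA k q n)) ∧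
    Set.BijOn
      (fun σ : Aqn k q n ≃ₐ[k] Aqn k q n =>
        ((σ (xA k q n 0) - xA k q n 0,
          fun i : {i : Fin q // i ≠ 0} => σ (xA k q n i.1) - xA k q n i.1) :
          Aqn k q n × ({i : Fin q // i ≠ 0} → Aqn k q n)))
      {σ | (∀ i, σ (xA k q n i) - xA k q n i ∈ (mA k q n) ^ 2) ∧
        Ideal.map σ (q1A k q n) = q1A k q n}
      {p | p.1 ∈ (mA k q n) ^ 2 ∧ ∀ i, p.2 i ∈ q1A k q n * mA k q n} := by
  refine ⟨fun σ hσ => part1 hn σ hσ, ?_, ?_, ?_⟩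
  · -- MapsTo
    rintro σ ⟨hlin, hmap⟩
    exact ⟨hlin 0, fun i => ((part1 hn σ hlin).1 hmap) i.1 i.2⟩
  · -- InjOn
    rintro σ ⟨hσlin, hσmap⟩ τ ⟨hτlin, hτmap⟩ heq
    simp only [Prod.mk.injEq] at heq
    obtain ⟨h0, hrest⟩ := heq
    have hx : ∀ i, σ (xA k q n i) = τ (xA k q n i) := by
      intro i
      by_cases h : i = 0
      · subst h; exact sub_left_inj.1 h0
      · exact sub_left_inj.1 (congrFun hrest ⟨i, h⟩)
    have hhom : (σ : Aqn k q n →ₐ[k] Aqn k q n).comp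
        (Ideal.Quotient.mkₐ k ((m0 k q) ^ n)) =
        (τ : Aqn k q n →ₐ[k] Aqn k q n).comp (Ideal.Quotient.mkₐ k ((m0 k q) ^ n)) := by
      apply MvPolynomial.algHom_ext
      intro i
      exact hx i
    apply AlgEquiv.ext
    intro z
    obtain ⟨p, rfl⟩ := mkq_surj k q n z
    exact DFunLike.congr_fun hhom p
  · -- SurjOn
    rintro ⟨a, b⟩ ⟨ha, hb⟩
    have ha' : a ∈ Ideal.map (mkq k q n) ((m0 k q) ^ 2) := by
      rw [Ideal.map_pow, ← mA_eq]; exact ha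
    obtain ⟨P, hP, hPe⟩ := Ideal.mem_map_iff_of_surjective _ (mkq_surj k q n) |>.1 ha'
    have hb' : ∀ i : {i : Fin q // i ≠ 0}, b i ∈ Ideal.map (mkq k q n) (q10 k q * m0 k q) := by
      intro i; rw [Ideal.map_mul, ← q1A_eq, ← mA_eq]; exact hb i
    choose B hB hBe using fun i => Ideal.mem_map_iff_of_surjective _ (mkq_surj k q n) |>.1 (hb' i)
    classical
    set F : Fin q → R k q := fun i => if h : i = 0 then P else B ⟨i, h⟩ with hFdef
    have hq10m0 : q10 k q * m0 k q ≤ (m0 k q) ^ 2 := by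
      rw [sq]; exact Ideal.mul_mono q10_le_m0 le_rfl
    have hF : ∀ i, F i ∈ (m0 k q) ^ 2 := by
      intro i
      by_cases h : i = 0
      · rw [hFdef]; simpa [h] using hP
      · rw [hFdef]; simpa [h] using hq10m0 (hB ⟨i, h⟩)
    have hbij := phiA_bijective n F hF hn
    have hdiff : ∀ i, (AlgEquiv.ofBijective (phiA n F hF) hbij) (xA k q n i) - xA k q n i =
        mkq k q n (F i) := by
      intro i
      show phiA n F hF (xA k q n i) - xA k q n i = _
      rw [phiA_x n F hF i]
      ring
    refine ⟨AlgEquiv.ofBijective (phiA n F hF) hbij, ⟨?_, ?_⟩, ?_⟩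
    · intro i
      rw [hdiff i]
      have hmem := Ideal.mem_map_of_mem (mkq k q n) (hF i)
      rwa [Ideal.map_pow, ← mA_eq] at hmem
    · apply map_q1A_eq
      intro i hi
      rw [hdiff i]
      have hFi : F i = B ⟨i, hi⟩ := by rw [hFdef]; exact dif_neg hi
      rw [hFi]
      have hmem := Ideal.mem_map_of_mem (mkq k q n) (hB ⟨i, hi⟩)
      rwa [Ideal.map_mul, ← q1A_eq, ← mA_eq] at hmem
    · have h1 : (AlgEquiv.ofBijective (phiA n F hF) hbij) (xA k q n 0) - xA k q n 0 = a := by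
        rw [hdiff 0]
        have hF0 : F 0 = P := by rw [hFdef]; exact dif_pos rfl
        rw [hF0]
        exact hPe
      have h2 : (fun i : {i : Fin q // i ≠ 0} =>
          (AlgEquiv.ofBijective (phiA n F hF) hbij) (xA k q n i.1) - xA k q n i.1) = b := by
        funext i
        rw [hdiff i.1]
        have hFi : F i.1 = B i := by
          rw [hFdef]
          simp only [dif_neg i.2]
        rw [hFi]
        exact hBe i
      show (_, _) = (a, b)
      rw [Prod.mk.injEq]
      exact ⟨h1, h2⟩
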